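/- Let M, N be σ-finite measure spaces, 1 ≤ r̃ ≤ r ≤ ∞, and let A : L^{r̃}(M) → L^r(M) and B : L^{r̃}(N) → L^r(N) be bounded linear operators with norms C_A and C_B respectively. Then the tensor product operator A ⊗ B, acting on functions on M × N by applying A in the first variable and B in the second, is bounded from L^{r̃}(M × N) to L^r(M × N) with norm at most C_A · C_B. -/

import Mathlib

open MeasureTheory ENNReal Function

section aux
variable {M N : Type*} [MeasurableSpace M] [MeasurableSpace N]

lemma minkowski_core (μ : Measure M) (ν : Measure N) [SFinite μ] [SFinite ν]
    {s t : ℝ} (hst : s.HolderConjugate t)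
    (G : M → N → ℝ≥0∞) (hG : Measurable (uncurry G))
    (Ψ : N → ℝ≥0∞) (hΨ : Measurable Ψ)
    (hΨle : ∀ y, Ψ y ≤ ∫⁻ x, G x y ∂μ)
    (hfin : ∫⁻ y, Ψ y ^ s ∂ν ≠ ∞) :
    (∫⁻ y, Ψ y ^ s ∂ν) ^ (1 / s) ≤ ∫⁻ x, (∫⁻ y, G x y ^ s ∂ν) ^ (1 / s) ∂μ := by
  set J := ∫⁻ y, Ψ y ^ s ∂ν with hJ
  set R := ∫⁻ x, (∫⁻ y, G x y ^ s ∂ν) ^ (1 / s) ∂μ with hR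
  have hs1 : 1 < s := hst.lt
  have hs0 : (0:ℝ) < s := hst.pos
  have ht0 : (0:ℝ) < t := hst.symm.pos
  have h1t : (0:ℝ) ≤ 1 / t := by positivity
  have h1s : (0:ℝ) ≤ 1 / s := by positivity
  have hGy : ∀ y : N, Measurable fun x => G x y := fun y =>
    hG.comp measurable_prodMk_right
  have hmeas : Measurable fun p : N × M => Ψ p.1 ^ (s - 1) * G p.2 p.1 :=
    ((hΨ.comp measurable_fst).pow_const (s - 1)).mul (hG.comp measurable_swap)
  have hint : ∀ x : M, (∫⁻ y, (Ψ y ^ (s - 1)) ^ t ∂ν) = J := by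
    intro x
    refine lintegral_congr fun y => ?_
    rw [← ENNReal.rpow_mul, hst.sub_one_mul_conj]
  have key : J ≤ J ^ (1 / t) * R := by
    have e1 : J = ∫⁻ y, Ψ y ^ (s - 1) * Ψ y ∂ν := by
      refine lintegral_congr fun y => ?_
      calc Ψ y ^ s = Ψ y ^ (s - 1 + 1) := by norm_num
        _ = Ψ y ^ (s - 1) * Ψ y ^ (1:ℝ) :=
            ENNReal.rpow_add_of_nonneg (s-1) 1 (by linarith) zero_le_one
        _ = Ψ y ^ (s - 1) * Ψ y := by rw [ENNReal.rpow_one]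
    have e2 : ∫⁻ y, Ψ y ^ (s - 1) * Ψ y ∂ν ≤ ∫⁻ y, ∫⁻ x, Ψ y ^ (s - 1) * G x y ∂μ ∂ν := by
      refine lintegral_mono fun y => ?_
      rw [lintegral_const_mul _ (hGy y)]
      exact mul_le_mul_right (hΨle y) _
    have e3 : ∫⁻ y, ∫⁻ x, Ψ y ^ (s - 1) * G x y ∂μ ∂ν
        = ∫⁻ x, ∫⁻ y, Ψ y ^ (s - 1) * G x y ∂ν ∂μ :=
      lintegral_lintegral_swap hmeas.aemeasurable
    have e4 : ∀ x : M, ∫⁻ y, Ψ y ^ (s - 1) * G x y ∂ν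
        ≤ J ^ (1 / t) * (∫⁻ y, G x y ^ s ∂ν) ^ (1 / s) := by
      intro x
      have hGx : Measurable fun y => G x y := hG.comp measurable_prodMk_left
      have hholder := ENNReal.lintegral_mul_le_Lp_mul_Lq ν hst.symm
        ((hΨ.pow_const (s - 1)).aemeasurable) hGx.aemeasurable
      calc ∫⁻ y, Ψ y ^ (s - 1) * G x y ∂ν
          = ∫⁻ y, ((fun y => Ψ y ^ (s - 1)) * fun y => G x y) y ∂ν := rfl
        _ ≤ (∫⁻ y, (Ψ y ^ (s - 1)) ^ t ∂ν) ^ (1 / t) * (∫⁻ y, G x y ^ s ∂ν) ^ (1 / s) :=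
            hholder
        _ = J ^ (1 / t) * (∫⁻ y, G x y ^ s ∂ν) ^ (1 / s) := by rw [hint x]
    have e5 : ∫⁻ x, ∫⁻ y, Ψ y ^ (s - 1) * G x y ∂ν ∂μ ≤ J ^ (1 / t) * R := by
      rw [hR, ← lintegral_const_mul' _ _ (ENNReal.rpow_ne_top_of_nonneg h1t hfin)]
      exact lintegral_mono e4
    calc J = ∫⁻ y, Ψ y ^ (s - 1) * Ψ y ∂ν := e1
      _ ≤ ∫⁻ y, ∫⁻ x, Ψ y ^ (s - 1) * G x y ∂μ ∂ν := e2
      _ = ∫⁻ x, ∫⁻ y, Ψ y ^ (s - 1) * G x y ∂ν ∂μ := e3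
      _ ≤ J ^ (1 / t) * R := e5
  rcases eq_or_ne J 0 with h0 | h0
  · rw [h0, ENNReal.zero_rpow_of_pos (one_div_pos.mpr hs0)]
    exact zero_le
  · have hJt : J ^ (1 / t) ≠ 0 := by
      intro h
      rcases ENNReal.rpow_eq_zero_iff.mp h with ⟨h', _⟩ | ⟨h', hlt⟩
      · exact h0 h'
      · exact absurd hlt (not_lt.mpr h1t)
    have hJt' : J ^ (1 / t) ≠ ∞ := ENNReal.rpow_ne_top_of_nonneg h1t hfin
    have hsum : J ^ (1 / s) * J ^ (1 / t) = J := by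
      rw [← ENNReal.rpow_add_of_nonneg (1/s) (1/t) h1s h1t,
        show 1 / s + 1 / t = 1 by rw [one_div, one_div]; exact hst.inv_add_inv_eq_one,
        ENNReal.rpow_one]
    have key2 : J ^ (1 / s) * J ^ (1 / t) ≤ R * J ^ (1 / t) := by
      calc J ^ (1 / s) * J ^ (1 / t) = J := hsum
        _ ≤ J ^ (1 / t) * R := key
        _ = R * J ^ (1 / t) := mul_comm _ _
    exact (ENNReal.mul_le_mul_iff_left hJt hJt').mp key2

lemma iSup_rpow_nat {s : ℝ} (hs : 0 < s) (u : ℕ → ℝ≥0∞) :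
    (⨆ n, u n) ^ s = ⨆ n, u n ^ s := by
  have := map_iSup (ENNReal.orderIsoRpow s hs) u
  simpa only [ENNReal.orderIsoRpow_apply] using this

lemma iSup_min_nat (a : ℝ≥0∞) : (⨆ m : ℕ, min a m) = a := by
  refine le_antisymm (iSup_le fun m => min_le_left _ _) ?_
  rcases eq_or_ne a ∞ with h | h
  · subst h
    calc (⊤ : ℝ≥0∞) = ⨆ m : ℕ, (m : ℝ≥0∞) := by rw [ENNReal.iSup_natCast]
      _ ≤ ⨆ m : ℕ, min ⊤ (m : ℝ≥0∞) := by simp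
  · obtain ⟨m, hm⟩ := ENNReal.exists_nat_gt h
    exact le_trans (le_of_eq (min_eq_left hm.le).symm) (le_iSup (fun m : ℕ => min a m) m)

/-- **Minkowski's integral inequality** for `ℝ≥0∞`-valued functions. -/
lemma minkowski_integral_ineq (μ : Measure M) (ν : Measure N) [SFinite μ] [SFinite ν]
    {s : ℝ} (hs : 1 ≤ s) (G : M → N → ℝ≥0∞) (hG : Measurable (uncurry G)) :
    (∫⁻ y, (∫⁻ x, G x y ∂μ) ^ s ∂ν) ^ (1 / s) ≤ ∫⁻ x, (∫⁻ y, G x y ^ s ∂ν) ^ (1 / s) ∂μ := by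
  have hs0 : (0:ℝ) < s := lt_of_lt_of_le one_pos hs
  rcases eq_or_lt_of_le hs with h1 | hs1
  · -- s = 1 : this is Tonelli
    subst h1
    simp only [ENNReal.rpow_one, one_div_one]
    exact le_of_eq (lintegral_lintegral_swap hG.aemeasurable).symm
  -- s > 1
  set t : ℝ := s / (s - 1) with ht
  have hst : s.HolderConjugate t := Real.holderConjugate_iff.mpr ⟨hs1, by
    rw [ht]; field_simp; ring⟩
  set Φ : N → ℝ≥0∞ := fun y => ∫⁻ x, G x y ∂μ with hΦdef
  have hΦ : Measurable Φ := hG.lintegral_prod_left'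
  set R := ∫⁻ x, (∫⁻ y, G x y ^ s ∂ν) ^ (1 / s) ∂μ with hR
  -- partial-sum measures
  set κ : ℕ → Measure N := fun n => ∑ k ∈ Finset.range n, sfiniteSeq ν k with hκ
  have hκfin : ∀ n, IsFiniteMeasure (κ n) := by
    intro n
    constructor
    rw [hκ]
    simp only [Measure.finset_sum_apply]
    refine ENNReal.sum_lt_top.mpr fun k _ => measure_lt_top _ _
  have hκle : ∀ n, κ n ≤ ν := by
    intro n
    refine Measure.le_intro fun E hE _ => ?_
    conv_rhs => rw [← sum_sfiniteSeq ν]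
    rw [Measure.sum_apply _ hE]
    simp only [hκ, Measure.finset_sum_apply]
    exact ENNReal.sum_le_tsum _
  -- the truncations
  set Ψ : ℕ → N → ℝ≥0∞ := fun m y => min (Φ y) m with hΨdef
  have hΨm : ∀ m, Measurable (Ψ m) := fun m => hΦ.min measurable_const
  have hmono : ∀ y, Monotone fun m : ℕ => Ψ m y ^ s := by
    intro y
    intro i j hij
    exact ENNReal.rpow_le_rpow (min_le_min le_rfl (Nat.cast_le.mpr hij)) hs0.le
  -- I = ⨆ n ⨆ m, ∫ (Ψ m)^s dκ n
  have hI : ∫⁻ y, Φ y ^ s ∂ν = ⨆ n, ⨆ m, ∫⁻ y, Ψ m y ^ s ∂(κ n) := by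
    have h1 : ∀ n, ∫⁻ y, Φ y ^ s ∂(κ n) = ⨆ m, ∫⁻ y, Ψ m y ^ s ∂(κ n) := by
      intro n
      rw [← lintegral_iSup (fun m => (hΨm m).pow_const s)
        (fun i j hij y => hmono y hij)]
      refine lintegral_congr fun y => ?_
      rw [← iSup_rpow_nat hs0, iSup_min_nat]
    conv_lhs => rw [← sum_sfiniteSeq ν]
    rw [lintegral_sum_measure, ENNReal.tsum_eq_iSup_nat]
    refine iSup_congr fun n => ?_
    rw [← h1 n]
    simp only [hκ]
    exact (lintegral_finset_sum_measure _ _ _).symm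
  rw [hI, iSup_rpow_nat (one_div_pos.mpr hs0)]
  refine iSup_le fun n => ?_
  rw [iSup_rpow_nat (one_div_pos.mpr hs0)]
  refine iSup_le fun m => ?_
  haveI := hκfin n
  have hfin : ∫⁻ y, Ψ m y ^ s ∂(κ n) ≠ ∞ := by
    have hb : ∫⁻ y, Ψ m y ^ s ∂(κ n) ≤ ∫⁻ _, ((m : ℝ≥0∞)) ^ s ∂(κ n) :=
      lintegral_mono fun y => ENNReal.rpow_le_rpow (min_le_right _ _) hs0.le
    refine ne_of_lt (lt_of_le_of_lt hb ?_)
    rw [lintegral_const]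
    exact ENNReal.mul_lt_top
      (ENNReal.rpow_lt_top_of_nonneg hs0.le (by simp)) (measure_lt_top _ _)
  have hcore := minkowski_core μ (κ n) hst G hG (Ψ m) (hΨm m)
    (fun y => min_le_left _ _) hfin
  refine hcore.trans (lintegral_mono fun x => ?_)
  exact ENNReal.rpow_le_rpow (lintegral_mono' (hκle n) le_rfl) (one_div_pos.mpr hs0).le


end aux


/-- Tensor product of bounded operators: if `A : L^{r̃}(M) → L^r(M)` has norm `≤ C_A`
and `B : L^{r̃}(N) → L^r(N)` has norm `≤ C_B`, with `1 ≤ r̃ ≤ r ≤ ∞`, then the operator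
`A ⊗ B` (apply `B` in the `y` variable, then `A` in the `x` variable) is bounded from
`L^{r̃}(M × N)` to `L^r(M × N)` with norm at most `C_A · C_B`. -/
theorem tensor_product_bounded
    {M N : Type*} [MeasurableSpace M] [MeasurableSpace N]
    (μ : Measure M) (ν : Measure N) [SFinite μ] [SFinite ν]
    (rt r : ℝ≥0∞) (h1 : 1 ≤ rt) (hrr : rt ≤ r)
    (A : (M → ℂ) → (M → ℂ)) (B : (N → ℂ) → (N → ℂ))
    (CA CB : ℝ≥0∞)
    (hA : ∀ φ : M → ℂ, eLpNorm (A φ) r μ ≤ CA * eLpNorm φ rt μ)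
    (hB : ∀ ψ : N → ℂ, eLpNorm (B ψ) r ν ≤ CB * eLpNorm ψ rt ν)
    (S : (M × N → ℂ) → (M × N → ℂ))
    (hS : ∀ (f : M × N → ℂ) (x : M) (y : N),
      S f (x, y) = A (fun x' => B (fun y' => f (x', y')) y) x)
    (f : M × N → ℂ) (hf : Measurable f)
    (hSf : Measurable (S f))
    (hBf : Measurable fun p : M × N => B (fun y' => f (p.1, y')) p.2) :
    eLpNorm (S f) r (μ.prod ν) ≤ CA * CB * eLpNorm f rt (μ.prod ν) := by
  have hrt0 : rt ≠ 0 := (lt_of_lt_of_le zero_lt_one h1).ne'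
  have hr1 : 1 ≤ r := h1.trans hrr
  have hr0 : r ≠ 0 := (lt_of_lt_of_le zero_lt_one hr1).ne'
  set g : M → N → ℂ := fun x y => B (fun y' => f (x, y')) y with hgdef
  have hg : Measurable fun z : M × N => g z.1 z.2 := hBf
  have hSA : ∀ y, (fun x => S f (x, y)) = A (fun x' => g x' y) :=
    fun y => funext fun x => hS f x y
  set K := eLpNorm f rt (μ.prod ν) with hK
  by_cases hr : r = ∞
  · -- r = ∞ : essSup case
    subst hr
    -- common finisher
    suffices h : ∀ᵐ y ∂ν, eLpNormEssSup (fun x => S f (x, y)) μ ≤ CA * (CB * K) by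
      rw [eLpNorm_exponent_top, ← mul_assoc] at *
      refine essSup_le_of_ae_le _ ?_
      have hset : MeasurableSet {z : M × N | (‖S f z‖₊ : ℝ≥0∞) ≤ CA * CB * K} :=
        measurableSet_le hSf.enorm measurable_const
      rw [show {z : M × N | (‖S f z‖₊ : ℝ≥0∞) ≤ CA * CB * K}
          = {z : M × N | (fun x y => (‖S f (x, y)‖₊ : ℝ≥0∞) ≤ CA * CB * K) z.1 z.2} from rfl]
        at hset
      refine (Measure.ae_prod_iff_ae_ae hset).mpr ?_
      refine (Measure.ae_ae_comm hset).mpr ?_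
      refine h.mono fun y hy => ?_
      exact ae_le_eLpNormEssSup.mono fun x hx => hx.trans hy
    by_cases hrt : rt = ∞
    · -- rt = ∞
      subst hrt
      have step1 : ∀ᵐ x ∂μ, eLpNormEssSup (fun y => f (x, y)) ν ≤ K := by
        have h := Measure.ae_ae_of_ae_prod
          (ae_le_eLpNormEssSup (f := f) (μ := μ.prod ν))
        refine h.mono fun x hx => essSup_le_of_ae_le _ ?_
        refine hx.mono fun y hy => ?_
        rw [hK, eLpNorm_exponent_top]
        exact hy
      have step3 : ∀ᵐ x ∂μ, ∀ᵐ y ∂ν, (‖g x y‖₊ : ℝ≥0∞) ≤ CB * K := by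
        refine step1.mono fun x hx => ?_
        have h2 : eLpNormEssSup (fun y => g x y) ν ≤ CB * K := by
          refine le_trans ?_ (mul_le_mul_right hx CB)
          have := hB fun y' => f (x, y')
          rw [eLpNorm_exponent_top, eLpNorm_exponent_top] at this
          exact this
        exact ae_le_eLpNormEssSup.mono fun y hy => hy.trans h2
      have step4 : ∀ᵐ y ∂ν, ∀ᵐ x ∂μ, (‖g x y‖₊ : ℝ≥0∞) ≤ CB * K := by
        have hset : MeasurableSet {z : M × N | (fun x y => (‖g x y‖₊ : ℝ≥0∞) ≤ CB * K) z.1 z.2} :=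
          measurableSet_le hg.enorm measurable_const
        exact (Measure.ae_ae_comm hset).mp step3
      refine step4.mono fun y hy => ?_
      have h3 : eLpNorm (fun x => g x y) ∞ μ ≤ CB * K := by
        rw [eLpNorm_exponent_top]
        exact essSup_le_of_ae_le _ hy
      calc eLpNormEssSup (fun x => S f (x, y)) μ
          = eLpNorm (A (fun x' => g x' y)) ∞ μ := by rw [← eLpNorm_exponent_top, hSA y]
        _ ≤ CA * eLpNorm (fun x' => g x' y) ∞ μ := hA _
        _ ≤ CA * (CB * K) := mul_le_mul_right h3 CA
    · -- rt < ∞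
      set p := rt.toReal with hpdef
      have hp0 : 0 < p := ENNReal.toReal_pos hrt0 hrt
      set w : M → ℝ≥0∞ := fun x => (∫⁻ y, (‖f (x, y)‖₊ : ℝ≥0∞) ^ p ∂ν) ^ (1/p) with hwdef
      have hw : Measurable w :=
        (Measurable.lintegral_prod_right (f := fun x y => (‖f (x, y)‖₊ : ℝ≥0∞) ^ p)
          (hf.enorm.pow_const p)).pow_const (1/p)
      have hwf : ∀ x, eLpNorm (fun y => f (x, y)) rt ν = w x := by
        intro x
        rw [eLpNorm_eq_lintegral_rpow_enorm_toReal hrt0 hrt]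
        rfl
      have hwK : (∫⁻ x, w x ^ p ∂μ) ^ (1/p) = K := by
        rw [hK, eLpNorm_eq_lintegral_rpow_enorm_toReal hrt0 hrt,
          lintegral_prod _ (hf.enorm.pow_const p).aemeasurable]
        congr 1
        refine lintegral_congr fun x => ?_
        rw [hwdef, ← ENNReal.rpow_mul, one_div_mul_cancel hp0.ne', ENNReal.rpow_one]
        rfl
      have step3 : ∀ᵐ x ∂μ, ∀ᵐ y ∂ν, (‖g x y‖₊ : ℝ≥0∞) ≤ CB * w x := by
        refine Filter.Eventually.of_forall fun x => ?_
        have h2 : eLpNormEssSup (fun y => g x y) ν ≤ CB * w x := by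
          rw [← eLpNorm_exponent_top]
          exact (hB fun y' => f (x, y')).trans (by rw [hwf x])
        exact ae_le_eLpNormEssSup.mono fun y hy => hy.trans h2
      have step4 : ∀ᵐ y ∂ν, ∀ᵐ x ∂μ, (‖g x y‖₊ : ℝ≥0∞) ≤ CB * w x := by
        have hset : MeasurableSet
            {z : M × N | (fun x y => (‖g x y‖₊ : ℝ≥0∞) ≤ CB * w x) z.1 z.2} :=
          measurableSet_le hg.enorm ((hw.comp measurable_fst).const_mul CB)
        exact (Measure.ae_ae_comm hset).mp step3
      refine step4.mono fun y hy => ?_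
      have h3 : eLpNorm (fun x => g x y) rt μ ≤ CB * K := by
        rw [eLpNorm_eq_lintegral_rpow_enorm_toReal hrt0 hrt]
        calc (∫⁻ x, (‖g x y‖₊ : ℝ≥0∞) ^ p ∂μ) ^ (1/p)
            ≤ (∫⁻ x, (CB * w x) ^ p ∂μ) ^ (1/p) := by
              refine ENNReal.rpow_le_rpow (lintegral_mono_ae ?_) (one_div_pos.mpr hp0).le
              exact hy.mono fun x hx => ENNReal.rpow_le_rpow hx hp0.le
          _ = (CB ^ p * ∫⁻ x, w x ^ p ∂μ) ^ (1/p) := by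
              rw [← lintegral_const_mul _ (hw.pow_const p)]
              congr 1
              exact lintegral_congr fun x => ENNReal.mul_rpow_of_nonneg _ _ hp0.le
          _ = CB * (∫⁻ x, w x ^ p ∂μ) ^ (1/p) := by
              rw [ENNReal.mul_rpow_of_nonneg _ _ (one_div_pos.mpr hp0).le,
                ← ENNReal.rpow_mul, mul_one_div_cancel hp0.ne', ENNReal.rpow_one]
          _ = CB * K := by rw [hwK]
      calc eLpNormEssSup (fun x => S f (x, y)) μ
          = eLpNorm (A (fun x' => g x' y)) ∞ μ := by rw [← eLpNorm_exponent_top, hSA y]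
        _ ≤ CA * eLpNorm (fun x' => g x' y) rt μ := hA _
        _ ≤ CA * (CB * K) := mul_le_mul_right h3 CA
  · -- r < ∞ : the Minkowski case
    have hrtne : rt ≠ ∞ := ne_top_of_le_ne_top hr hrr
    set p := rt.toReal with hpdef
    set q := r.toReal with hqdef
    have hp0 : 0 < p := ENNReal.toReal_pos hrt0 hrtne
    have hq0 : 0 < q := ENNReal.toReal_pos hr0 hr
    have hpq : p ≤ q := ENNReal.toReal_mono hr hrr
    set s := q / p with hsdef
    have hs1 : 1 ≤ s := (one_le_div hp0).mpr hpq
    have hs0 : (0:ℝ) < s := lt_of_lt_of_le one_pos hs1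
    have hps : p * s = q := by rw [hsdef]; field_simp
    set G : M → N → ℝ≥0∞ := fun x y => (‖g x y‖₊ : ℝ≥0∞) ^ p with hGdef
    have hG : Measurable (uncurry G) := hg.enorm.pow_const p
    have hKit : K = (∫⁻ x, ∫⁻ y, (‖f (x, y)‖₊ : ℝ≥0∞) ^ p ∂ν ∂μ) ^ (1/p) := by
      rw [hK, eLpNorm_eq_lintegral_rpow_enorm_toReal hrt0 hrtne,
        lintegral_prod _ (hf.enorm.pow_const p).aemeasurable]
      rfl
    have e0 : eLpNorm (S f) r (μ.prod ν)
        = (∫⁻ y, ∫⁻ x, (‖S f (x, y)‖₊ : ℝ≥0∞) ^ q ∂μ ∂ν) ^ (1/q) := by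
      rw [eLpNorm_eq_lintegral_rpow_enorm_toReal hr0 hr,
        lintegral_prod_symm _ (hSf.enorm.pow_const q).aemeasurable]
      rfl
    have e1 : ∀ y, ∫⁻ x, (‖S f (x, y)‖₊ : ℝ≥0∞) ^ q ∂μ
        ≤ CA ^ q * (∫⁻ x, G x y ∂μ) ^ s := by
      intro y
      have h1 : ∫⁻ x, (‖S f (x, y)‖₊ : ℝ≥0∞) ^ q ∂μ
          = (eLpNorm (fun x => S f (x, y)) r μ) ^ q := by
        rw [eLpNorm_eq_lintegral_rpow_enorm_toReal hr0 hr, ← ENNReal.rpow_mul,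
          one_div_mul_cancel hq0.ne', ENNReal.rpow_one]
        rfl
      rw [h1]
      calc (eLpNorm (fun x => S f (x, y)) r μ) ^ q
          ≤ (CA * eLpNorm (fun x' => g x' y) rt μ) ^ q := by
            refine ENNReal.rpow_le_rpow ?_ hq0.le
            rw [hSA y]; exact hA _
        _ = CA ^ q * (eLpNorm (fun x' => g x' y) rt μ) ^ q :=
            ENNReal.mul_rpow_of_nonneg _ _ hq0.le
        _ = CA ^ q * (∫⁻ x, G x y ∂μ) ^ s := by
            rw [eLpNorm_eq_lintegral_rpow_enorm_toReal hrt0 hrtne, ← ENNReal.rpow_mul,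
              one_div_mul_eq_div, ← hsdef]
            rfl
    have meas1 : Measurable fun y => (∫⁻ x, G x y ∂μ) ^ s :=
      (hG.lintegral_prod_left').pow_const s
    set T := ∫⁻ y, (∫⁻ x, G x y ∂μ) ^ s ∂ν with hT
    have e2 : eLpNorm (S f) r (μ.prod ν) ≤ CA * T ^ (1/q) := by
      rw [e0]
      calc (∫⁻ y, ∫⁻ x, (‖S f (x, y)‖₊ : ℝ≥0∞) ^ q ∂μ ∂ν) ^ (1/q)
          ≤ (∫⁻ y, CA ^ q * (∫⁻ x, G x y ∂μ) ^ s ∂ν) ^ (1/q) :=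
            ENNReal.rpow_le_rpow (lintegral_mono e1) (one_div_pos.mpr hq0).le
        _ = (CA ^ q * T) ^ (1/q) := by rw [lintegral_const_mul _ meas1]
        _ = CA * T ^ (1/q) := by
            rw [ENNReal.mul_rpow_of_nonneg _ _ (one_div_pos.mpr hq0).le,
              ← ENNReal.rpow_mul, mul_one_div_cancel hq0.ne', ENNReal.rpow_one]
    set U := ∫⁻ x, (∫⁻ y, G x y ^ s ∂ν) ^ (1/s) ∂μ with hU
    have e3 : T ^ (1/s) ≤ U := minkowski_integral_ineq μ ν hs1 G hG
    have e4 : T ^ (1/q) ≤ U ^ (1/p) := by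
      have heq : (1:ℝ)/q = (1/s) * (1/p) := by
        rw [hsdef]; field_simp
      rw [heq, ENNReal.rpow_mul]
      exact ENNReal.rpow_le_rpow e3 (one_div_pos.mpr hp0).le
    have e5 : ∀ x, (∫⁻ y, G x y ^ s ∂ν) ^ (1/s)
        ≤ CB ^ p * ∫⁻ y, (‖f (x, y)‖₊ : ℝ≥0∞) ^ p ∂ν := by
      intro x
      have h1 : ∫⁻ y, G x y ^ s ∂ν = ∫⁻ y, (‖g x y‖₊ : ℝ≥0∞) ^ q ∂ν := by
        refine lintegral_congr fun y => ?_
        rw [hGdef, ← ENNReal.rpow_mul, hps]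
      have h2 : (∫⁻ y, (‖g x y‖₊ : ℝ≥0∞) ^ q ∂ν) ^ ((1:ℝ)/s)
          = (eLpNorm (fun y => g x y) r ν) ^ p := by
        rw [eLpNorm_eq_lintegral_rpow_enorm_toReal hr0 hr, ← ENNReal.rpow_mul]
        congr 1
        rw [hsdef]; field_simp
        exact (div_self hq0.ne').symm
      rw [h1, h2]
      calc (eLpNorm (fun y => g x y) r ν) ^ p
          ≤ (CB * eLpNorm (fun y => f (x, y)) rt ν) ^ p :=
            ENNReal.rpow_le_rpow (hB _) hp0.le
        _ = CB ^ p * (eLpNorm (fun y => f (x, y)) rt ν) ^ p :=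
            ENNReal.mul_rpow_of_nonneg _ _ hp0.le
        _ = CB ^ p * ∫⁻ y, (‖f (x, y)‖₊ : ℝ≥0∞) ^ p ∂ν := by
            rw [eLpNorm_eq_lintegral_rpow_enorm_toReal hrt0 hrtne, ← ENNReal.rpow_mul,
              one_div_mul_cancel hp0.ne', ENNReal.rpow_one]
            rfl
    have meas2 : Measurable fun x => ∫⁻ y, (‖f (x, y)‖₊ : ℝ≥0∞) ^ p ∂ν :=
      Measurable.lintegral_prod_right (hf.enorm.pow_const p)
    have e6 : U ^ ((1:ℝ)/p) ≤ CB * K := by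
      calc U ^ ((1:ℝ)/p)
          ≤ (∫⁻ x, CB ^ p * ∫⁻ y, (‖f (x, y)‖₊ : ℝ≥0∞) ^ p ∂ν ∂μ) ^ (1/p) :=
            ENNReal.rpow_le_rpow (lintegral_mono e5) (one_div_pos.mpr hp0).le
        _ = (CB ^ p * ∫⁻ x, ∫⁻ y, (‖f (x, y)‖₊ : ℝ≥0∞) ^ p ∂ν ∂μ) ^ (1/p) := by
            rw [lintegral_const_mul _ meas2]
        _ = CB * K := by
            rw [ENNReal.mul_rpow_of_nonneg _ _ (one_div_pos.mpr hp0).le,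
              ← ENNReal.rpow_mul, mul_one_div_cancel hp0.ne', ENNReal.rpow_one, hKit]
    calc eLpNorm (S f) r (μ.prod ν) ≤ CA * T ^ ((1:ℝ)/q) := e2
      _ ≤ CA * U ^ ((1:ℝ)/p) := mul_le_mul_right e4 CA
      _ ≤ CA * (CB * K) := mul_le_mul_right e6 CA
      _ = CA * CB * K := (mul_assoc _ _ _).symm
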